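/- Let X ∈ R^{n×(D'D'')} satisfy the 2R-RIP with constant δ ∈ (0,1). Let Â ∈ R^{D'×R} have orthonormal columns and define Σ ∈ R^{(R D'')×(R D'')} with (u,v)-block Σ_{uv} = (1/n) Σᵢ X̃ᵢ^T â_u â_v^T X̃ᵢ, where X̃ᵢ = vec⁻¹ of the i-th row of X reshaped to D'×D'' and â_u is the u-th column of Â. Then for every w ∈ R^{R D''} with ‖w‖₂ = 1, w^T Σ w ≥ 1 − δ; consequently Σ is invertible and ‖Σ⁻¹‖_op ≤ 1/(1−δ). -/

import Mathlib

open Matrix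

/-- Frobenius norm of a real matrix. -/
noncomputable def frobNorm {m n : Type*} [Fintype m] [Fintype n] (M : Matrix m n ℝ) : ℝ :=
  Real.sqrt (∑ i, ∑ j, (M i j) ^ 2)

/-- Operator (spectral) norm of a real matrix. -/
noncomputable def opNorm {m n : Type*} [Fintype m] [Fintype n] [DecidableEq n]
    (M : Matrix m n ℝ) : ℝ :=
  ‖LinearMap.toContinuousLinearMap (Matrix.toEuclideanLin M)‖

/-- The r-restricted isometry property with constant δ. -/
def RIP (n D1 D2 : ℕ) (X : Matrix (Fin n) (Fin D1 × Fin D2) ℝ) (r : ℕ) (δ : ℝ) : Prop :=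
  ∀ M : Matrix (Fin D1) (Fin D2) ℝ, M.rank ≤ r →
    (1 - δ) * frobNorm M ^ 2 ≤
        (1 / (n : ℝ)) * ∑ i, (X.mulVec (fun jk => M jk.1 jk.2) i) ^ 2 ∧
    (1 / (n : ℝ)) * ∑ i, (X.mulVec (fun jk => M jk.1 jk.2) i) ^ 2 ≤
        (1 + δ) * frobNorm M ^ 2

private lemma sum_rot3 {α β γ : Type*} [Fintype α] [Fintype β] [Fintype γ]
    (f : α → β → γ → ℝ) :
    ∑ a, ∑ b, ∑ c, f a b c = ∑ b, ∑ c, ∑ a, f a b c := by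
  calc ∑ a, ∑ b, ∑ c, f a b c = ∑ b, ∑ a, ∑ c, f a b c := Finset.sum_comm
    _ = ∑ b, ∑ c, ∑ a, f a b c := Finset.sum_congr rfl fun b _ => Finset.sum_comm

private lemma sum_rev3 {α β γ : Type*} [Fintype α] [Fintype β] [Fintype γ]
    (f : α → β → γ → ℝ) :
    ∑ a, ∑ b, ∑ c, f a b c = ∑ c, ∑ b, ∑ a, f a b c := by
  calc ∑ a, ∑ b, ∑ c, f a b c = ∑ b, ∑ c, ∑ a, f a b c := sum_rot3 f
    _ = ∑ c, ∑ b, ∑ a, f a b c := Finset.sum_comm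

theorem stmt9 (n D1 D2 R : ℕ) (hn : 0 < n) (X : Matrix (Fin n) (Fin D1 × Fin D2) ℝ)
    (δ : ℝ) (hδ : 0 < δ ∧ δ < 1) (hRIP : RIP n D1 D2 X (2 * R) δ)
    (Ahat : Matrix (Fin D1) (Fin R) ℝ) (hAhat : Ahatᵀ * Ahat = 1)
    (S : Matrix (Fin R × Fin D2) (Fin R × Fin D2) ℝ)
    (hS : ∀ u v a b, S (u, a) (v, b) =
      (1 / (n : ℝ)) * ∑ i, (∑ j, X i (j, a) * Ahat j u) * (∑ j, X i (j, b) * Ahat j v)) :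
    (∀ w : Fin R × Fin D2 → ℝ, (∑ x, w x ^ 2) = 1 →
        1 - δ ≤ ∑ x, w x * S.mulVec w x) ∧
    IsUnit S ∧ opNorm S⁻¹ ≤ 1 / (1 - δ) := by
  obtain ⟨hδ0, hδ1⟩ := hδ
  have hpos : (0:ℝ) < 1 - δ := by linarith
  set t : (Fin R × Fin D2) → Fin n → ℝ := fun x i => ∑ j, X i (j, x.2) * Ahat j x.1 with ht
  have hS' : ∀ x y : Fin R × Fin D2, S x y = (1 / (n : ℝ)) * ∑ i, t x i * t y i :=
    fun x y => hS x.1 y.1 x.2 y.2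
  -- key quadratic form bound
  have key : ∀ w : Fin R × Fin D2 → ℝ,
      (1 - δ) * (∑ x, w x ^ 2) ≤ ∑ x, w x * S.mulVec w x := by
    intro w
    set W : Matrix (Fin R) (Fin D2) ℝ := Matrix.of (fun u k => w (u, k)) with hW
    set M : Matrix (Fin D1) (Fin D2) ℝ := Ahat * W with hM
    have hrank : M.rank ≤ 2 * R := by
      calc M.rank ≤ Ahat.rank := Matrix.rank_mul_le_left _ _
        _ ≤ R := Matrix.rank_le_width Ahat
        _ ≤ 2 * R := by omega
    have hfrob : frobNorm M ^ 2 = ∑ x, w x ^ 2 := by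
      have h1 : frobNorm M ^ 2 = ∑ j, ∑ k, (M j k) ^ 2 := by
        rw [frobNorm, Real.sq_sqrt]
        positivity
      have h2 : Mᵀ * M = Wᵀ * W := by
        rw [hM, Matrix.transpose_mul, Matrix.mul_assoc, ← Matrix.mul_assoc Ahatᵀ, hAhat,
          Matrix.one_mul]
      have h3 : ∑ j, ∑ k, (M j k) ^ 2 = Matrix.trace (Mᵀ * M) := by
        simp only [Matrix.trace, Matrix.diag, Matrix.mul_apply, Matrix.transpose_apply, sq]
        rw [Finset.sum_comm]
      have h4 : Matrix.trace (Wᵀ * W) = ∑ x : Fin R × Fin D2, w x ^ 2 := by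
        simp only [Matrix.trace, Matrix.diag, Matrix.mul_apply, Matrix.transpose_apply, sq]
        rw [Fintype.sum_prod_type, Finset.sum_comm]
        rfl
      rw [h1, h3, h2, h4]
    have hvec : ∀ i, X.mulVec (fun jk => M jk.1 jk.2) i
        = ∑ x : Fin R × Fin D2, w x * t x i := by
      intro i
      show ∑ jk : Fin D1 × Fin D2, X i jk * M jk.1 jk.2 = _
      simp only [ht, hM, Matrix.mul_apply, hW, Matrix.of_apply, Finset.mul_sum,
        Fintype.sum_prod_type]
      rw [sum_rev3 (fun j k u => X i (j, k) * (Ahat j u * w (u, k)))]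
      refine Finset.sum_congr rfl fun u _ => Finset.sum_congr rfl fun k _ =>
        Finset.sum_congr rfl fun j _ => by ring
    have hquad : ∑ x, w x * S.mulVec w x
        = (1 / (n : ℝ)) * ∑ i, (X.mulVec (fun jk => M jk.1 jk.2) i) ^ 2 := by
      have lhs : ∑ x, w x * S.mulVec w x
          = ∑ x, ∑ y, ∑ i, (1/(n:ℝ)) * ((w x * t x i) * (w y * t y i)) := by
        refine Finset.sum_congr rfl fun x _ => ?_
        show w x * ∑ y, S x y * w y = _
        rw [Finset.mul_sum]
        refine Finset.sum_congr rfl fun y _ => ?_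
        rw [hS', Finset.mul_sum, Finset.sum_mul, Finset.mul_sum]
        exact Finset.sum_congr rfl fun i _ => by ring
      have rhs : (1 / (n : ℝ)) * ∑ i, (X.mulVec (fun jk => M jk.1 jk.2) i) ^ 2
          = ∑ i, ∑ x, ∑ y, (1/(n:ℝ)) * ((w x * t x i) * (w y * t y i)) := by
        simp only [hvec]
        rw [Finset.mul_sum]
        refine Finset.sum_congr rfl fun i _ => ?_
        rw [sq, Finset.sum_mul_sum, Finset.mul_sum]
        exact Finset.sum_congr rfl fun a _ => by rw [Finset.mul_sum]
      rw [lhs, rhs, sum_rot3 (fun i x y => (1/(n:ℝ)) * ((w x * t x i) * (w y * t y i)))]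
    have := (hRIP M hrank).1
    rw [hfrob] at this
    rw [hquad]
    exact this
  have part1 : ∀ w : Fin R × Fin D2 → ℝ, (∑ x, w x ^ 2) = 1 →
      1 - δ ≤ ∑ x, w x * S.mulVec w x := by
    intro w hw
    have := key w
    rwa [hw, mul_one] at this
  -- injectivity / invertibility
  have hker : ∀ v : Fin R × Fin D2 → ℝ, S.mulVec v = 0 → v = 0 := by
    intro v hv
    have hk := key v
    rw [show ∑ x, v x * S.mulVec v x = 0 by simp [hv]] at hk
    have hsum : ∑ x, v x ^ 2 ≤ 0 := by nlinarith
    have hz : ∑ x, v x ^ 2 = 0 := le_antisymm hsum (by positivity)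
    funext x
    have := (Finset.sum_eq_zero_iff_of_nonneg (fun i _ => sq_nonneg (v i))).mp hz x
      (Finset.mem_univ x)
    exact pow_eq_zero_iff (by norm_num) |>.mp this
  have hinj : Function.Injective S.mulVec := by
    intro a b hab
    have h0 : S.mulVec (a - b) = 0 := by rw [Matrix.mulVec_sub, hab, sub_self]
    exact sub_eq_zero.mp (hker _ h0)
  have hunit : IsUnit S := Matrix.mulVec_injective_iff_isUnit.mp hinj
  have hSS : S * S⁻¹ = 1 := Matrix.mul_nonsing_inv _ ((Matrix.isUnit_iff_isUnit_det S).mp hunit)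
  refine ⟨part1, hunit, ?_⟩
  -- opNorm bound
  apply ContinuousLinearMap.opNorm_le_bound _ (by positivity)
  intro v
  set y : Fin R × Fin D2 → ℝ := (WithLp.equiv 2 _) v with hy
  set x : Fin R × Fin D2 → ℝ := S⁻¹.mulVec y with hx
  have hxy : S.mulVec x = y := by
    rw [hx, Matrix.mulVec_mulVec, hSS, Matrix.one_mulVec]
  have happ : (LinearMap.toContinuousLinearMap (Matrix.toEuclideanLin S⁻¹)) v
      = (WithLp.equiv 2 ((Fin R × Fin D2) → ℝ)).symm x := rfl
  rw [happ]
  have norm_eq : ∀ z : Fin R × Fin D2 → ℝ,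
      ‖(WithLp.equiv 2 ((Fin R × Fin D2) → ℝ)).symm z‖ = Real.sqrt (∑ i, z i ^ 2) := by
    intro z
    rw [EuclideanSpace.norm_eq]
    congr 1
    refine Finset.sum_congr rfl fun i _ => ?_
    rw [Real.norm_eq_abs, sq_abs]
    rfl
  have hnv : ‖v‖ = Real.sqrt (∑ i, y i ^ 2) := by
    rw [show v = (WithLp.equiv 2 ((Fin R × Fin D2) → ℝ)).symm y from rfl, norm_eq]
  rw [norm_eq, hnv]
  have hCS : ∑ i, x i * y i ≤ Real.sqrt (∑ i, x i ^ 2) * Real.sqrt (∑ i, y i ^ 2) := by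
    have h := real_inner_le_norm ((WithLp.equiv 2 ((Fin R × Fin D2) → ℝ)).symm x)
      ((WithLp.equiv 2 ((Fin R × Fin D2) → ℝ)).symm y)
    rw [norm_eq, norm_eq] at h
    have hinner : (inner ℝ ((WithLp.equiv 2 ((Fin R × Fin D2) → ℝ)).symm x)
        ((WithLp.equiv 2 ((Fin R × Fin D2) → ℝ)).symm y) : ℝ) = ∑ i, x i * y i := by
      rw [PiLp.inner_apply]
      exact Finset.sum_congr rfl fun i _ => by simp [mul_comm]
    rwa [hinner] at h
  have hk := key x
  rw [show ∑ i, x i * S.mulVec x i = ∑ i, x i * y i by rw [hxy]] at hk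
  have hsx : (0:ℝ) ≤ Real.sqrt (∑ i, x i ^ 2) := Real.sqrt_nonneg _
  rcases eq_or_lt_of_le hsx with h0 | h0
  · rw [← h0]
    positivity
  · have hsq : (∑ i, x i ^ 2) = (Real.sqrt (∑ i, x i ^ 2)) ^ 2 := by
      rw [Real.sq_sqrt]; positivity
    have hb : (1 - δ) * Real.sqrt (∑ i, x i ^ 2) ≤ Real.sqrt (∑ i, y i ^ 2) := by
      have h := le_trans hk hCS
      rw [hsq] at h
      nlinarith
    rw [div_mul_eq_mul_div, le_div_iff₀ hpos]
    linarith [hb]
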